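/- Let A be an infinite cycle, let i ≠ j be nodes, and let n' > max(i,j). Then there exists n ≤ n' with ν_A(n) = {i,j} if and only if the segment of A_{n'} between i and j is nonempty and every node in it is larger than both i and j; and in that case the (unique) such n is the smallest node in the segment between i and j. -/

import Mathlib

open MeasureTheory

/-- An infinite cycle: coordinate `i` represents the choice `c_{i+3} ∈ {1,…,i+3}`
(encoded as `Fin (i+3)`, with value `v` representing `v+1`). -/
abbrev InfCycle := ∀ i : ℕ, Fin (i + 3)

/-- The list of nodes of the cycle `A_n`, in positive direction starting at node 1.
`A_{n+1}` arises from `A_n` by inserting node `n+1` into the `c_n`-th edge. -/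
def listOf (c : InfCycle) : ℕ → List ℕ
  | 0 => []
  | 1 => []
  | 2 => []
  | 3 => [1, 2, 3]
  | (n + 4) => (listOf c (n + 3)).insertIdx ((c n).val + 1) (n + 4)

/-- The node following `x` in the cyclic order given by the list `l`. -/
def cyclicNext (l : List ℕ) (x : ℕ) : ℕ := (l.rotate 1).getD (l.idxOf x) 0

/-- The node preceding `x` in the cyclic order given by the list `l`. -/
def cyclicPrev (l : List ℕ) (x : ℕ) : ℕ := (l.rotate (l.length - 1)).getD (l.idxOf x) 0

/-- `ν⁺_A(k)`: the neighbor of `k` in `A_k` in positive direction. -/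
def nuPlus (c : InfCycle) (k : ℕ) : ℕ :=
  if k ≤ 1 then 0 else if k = 2 then 1 else cyclicNext (listOf c k) k

/-- `ν⁻_A(k)`: the neighbor of `k` in `A_k` in negative direction. -/
def nuMinus (c : InfCycle) (k : ℕ) : ℕ :=
  if k ≤ 1 then 0 else if k = 2 then 1 else cyclicPrev (listOf c k) k

/-- `ν_A(k) = {ν⁺_A(k), ν⁻_A(k)}`, the edge of `A_{k-1}` into which `k` was inserted. -/
def nuSet (c : InfCycle) (k : ℕ) : Finset ℕ := {nuPlus c k, nuMinus c k}

/-- The edges (as unordered pairs) of the cycle whose nodes, in cyclic order, are `l`. -/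
def edgeList (l : List ℕ) : List (Finset ℕ) :=
  l.zipWith (fun x y => ({x, y} : Finset ℕ)) (l.rotate 1)

/-- `E(A_n)`: the edge set of the cycle `A_n`. -/
def cycleEdges (c : InfCycle) (n : ℕ) : Finset (Finset ℕ) := (edgeList (listOf c n)).toFinset

/-- `k` is a vertex of the pedigree graph `G_n^{AB}`. -/
def isVertex (a b : InfCycle) (n k : ℕ) : Prop := 4 ≤ k ∧ k ≤ n ∧ nuSet a k ≠ nuSet b k

/-- The condition for an edge of the pedigree graph between vertices `k < m`
(type-1 A→B, type-1 B→A, type-2 A→B, type-2 B→A). -/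
def edgeCond (a b : InfCycle) (k m : ℕ) : Prop :=
  nuSet a m = nuSet b k ∨ nuSet b m = nuSet a k ∨
  (k = max (nuPlus a m) (nuMinus a m) ∧ nuSet b k ∩ nuSet a m = ∅) ∨
  (k = max (nuPlus b m) (nuMinus b m) ∧ nuSet a k ∩ nuSet b m = ∅)

/-- The pedigree graph `G_n^{AB}`, as a graph on `ℕ` (non-vertices are isolated). -/
def pedigreeGraph (a b : InfCycle) (n : ℕ) : SimpleGraph ℕ where
  Adj k m := isVertex a b n k ∧ isVertex a b n m ∧
    ((k < m ∧ edgeCond a b k m) ∨ (m < k ∧ edgeCond a b m k))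
  symm := ⟨fun k m ⟨h1, h2, h3⟩ => ⟨h2, h1, h3.symm⟩⟩
  loopless := ⟨fun k h => by rcases h.2.2 with ⟨h', _⟩ | ⟨h', _⟩ <;> exact absurd h' (lt_irrefl k)⟩

/-- The vertex set of the pedigree graph `G_n^{AB}`. -/
def vertexSet (a b : InfCycle) (n : ℕ) : Set ℕ := {k | isVertex a b n k}

/-- The pedigree graph `G_n^{AB}` on its vertex set. -/
def pGraph (a b : InfCycle) (n : ℕ) : SimpleGraph (vertexSet a b n) :=
  (pedigreeGraph a b n).induce (vertexSet a b n)

/-- The pedigree graph `G_n^{AB}` is connected. -/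
def pConnected (a b : InfCycle) (n : ℕ) : Prop := (pGraph a b n).Connected

/-- `T_n`: the number of connected components of the pedigree graph `G_n^{AB}`. -/
noncomputable def Tnum (a b : InfCycle) (n : ℕ) : ℕ :=
  Nat.card (pGraph a b n).ConnectedComponent

/-- `I_n`: at time `n`, the node `n` is added to the pedigree graph as an isolated vertex. -/
def isolatedAt (a b : InfCycle) (n : ℕ) : Prop :=
  isVertex a b n n ∧ ∀ k, ¬ (pedigreeGraph a b n).Adj n k

/-- The event that the first `m` coordinates (`c_3, …, c_{m+2}`) agree with those of `b₀`. -/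
def prefixEvent (b₀ : InfCycle) (m : ℕ) : Set InfCycle := {b | ∀ j, j < m → b j = b₀ j}

/-- `μ` is the distribution of a random infinite cycle: the product over `n ≥ 3` of the
uniform measures on `{1,…,n}`.  (This property determines `μ` uniquely.) -/
def IsCycleMeasure (μ : Measure InfCycle) : Prop :=
  IsProbabilityMeasure μ ∧
    ∀ (b₀ : InfCycle) (m : ℕ),
      μ (prefixEvent b₀ m) = ∏ j ∈ Finset.range m, ((j + 3 : ℕ) : ENNReal)⁻¹

/-- An Alice strategy: her choice at each time depends only on Bob's earlier choices. -/
structure AliceStrategy where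
  play : InfCycle → InfCycle
  adapted : ∀ (b b' : InfCycle) (i : ℕ), (∀ j, j < i → b j = b' j) → play b i = play b' i

/-- `S_n = |E(A_n) ∩ E(B_n)|`. -/
def Sval (a b : InfCycle) (n : ℕ) : ℕ := (cycleEdges a n ∩ cycleEdges b n).card

/-- `S*_n`: the number of common edges not incident on `ν_A(n+1)`. -/
def Sstar (a b : InfCycle) (n : ℕ) : ℕ :=
  ((cycleEdges a n ∩ cycleEdges b n).filter (fun e => e ∩ nuSet a (n + 1) = ∅)).card

/-- `R_n`: the number of edges of `B_n` that are not common and not incident on `ν_A(n+1)`. -/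
def Rval (a b : InfCycle) (n : ℕ) : ℕ :=
  ((cycleEdges b n \ cycleEdges a n).filter (fun e => e ∩ nuSet a (n + 1) = ∅)).card

/-- Alice's move at time `m` is a d-move: `ν_A(m) ∉ E^∩_{m-1}`. -/
def dMoveAt (a b : InfCycle) (m : ℕ) : Prop := nuSet a m ∉ cycleEdges b (m - 1)

/-- `Y`: the total number of times an isolated vertex is created in the pedigree graph. -/
noncomputable def Yval (a b : InfCycle) : ENNReal :=
  ∑' m : ℕ, Set.indicator {x : ℕ | isolatedAt a b x} (fun _ => 1) m

/-- The open arc of the cycle (given as a list `l` in positive cyclic order) from `i` to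
`j` in positive direction, excluding both endpoints. -/
def arcList (l : List ℕ) (i j : ℕ) : List ℕ :=
  ((l.rotate (l.idxOf i)).tail).takeWhile (· ≠ j)

/-- `min({1,2,3} \ {i,j})`. -/
def segPivot (i j : ℕ) : ℕ :=
  if 1 ≠ i ∧ 1 ≠ j then 1 else if 2 ≠ i ∧ 2 ≠ j then 2 else 3

/-- The cycSegment between `i` and `j`: the open arc between them which does not contain
`min({1,2,3} \ {i,j})`. -/
def cycSegment (l : List ℕ) (i j : ℕ) : List ℕ :=
  if segPivot i j ∈ arcList l i j then arcList l j i else arcList l i j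

namespace NuPair

theorem insertIdx_eq {α : Type*} (x : α) : ∀ (pos : ℕ) (l : List α), pos ≤ l.length →
    l.insertIdx pos x = l.take pos ++ x :: l.drop pos
  | 0, l, _ => rfl
  | (n+1), [], h => by simp at h
  | (n+1), (y :: l), h => by
    simp only [List.insertIdx_succ_cons, List.take_succ_cons, List.drop_succ_cons,
      List.cons_append, List.cons.injEq, true_and]
    exact insertIdx_eq x n l (by simpa using h)

theorem perm_insertIdx {α : Type*} (x : α) {pos : ℕ} {l : List α} (h : pos ≤ l.length) :
    (l.insertIdx pos x).Perm (x :: l) := by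
  rw [insertIdx_eq x pos l h]
  refine List.perm_middle.trans ?_
  rw [List.take_append_drop]

theorem listOf_succ (a : InfCycle) (k : ℕ) :
    listOf a (k+4) = (listOf a (k+3)).insertIdx ((a k).val + 1) (k+4) := rfl

theorem listOf_props (a : InfCycle) : ∀ n, 3 ≤ n → (listOf a n).length = n ∧
    (∀ x, x ∈ listOf a n ↔ 1 ≤ x ∧ x ≤ n) ∧ (listOf a n).Nodup := by
  intro n hn
  induction n, hn using Nat.le_induction with
  | base =>
    refine ⟨rfl, ?_, show ([1,2,3] : List ℕ).Nodup by decide⟩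
    intro x; show x ∈ [1,2,3] ↔ _
    simp; omega
  | succ n hn ih =>
    obtain ⟨len, mem, nd⟩ := ih
    obtain ⟨k, rfl⟩ : ∃ k, n = k + 3 := ⟨n - 3, by omega⟩
    have hpos : (a k).val + 1 ≤ (listOf a (k+3)).length := by
      have := (a k).isLt; omega
    have hperm := perm_insertIdx (k+4) hpos
    rw [listOf_succ]
    refine ⟨?_, ?_, ?_⟩
    · rw [List.length_insertIdx_of_le_length hpos, len]
    · intro x
      rw [hperm.mem_iff, List.mem_cons, mem]
      omega
    · refine hperm.nodup_iff.mpr (List.nodup_cons.mpr ⟨fun hm => ?_, nd⟩)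
      have := (mem _).mp hm; omega

theorem length_listOf (a : InfCycle) {n : ℕ} (h : 3 ≤ n) : (listOf a n).length = n :=
  (listOf_props a n h).1

theorem mem_listOf (a : InfCycle) {n : ℕ} (h : 3 ≤ n) {x : ℕ} :
    x ∈ listOf a n ↔ 1 ≤ x ∧ x ≤ n := (listOf_props a n h).2.1 x

theorem nodup_listOf (a : InfCycle) {n : ℕ} (h : 3 ≤ n) : (listOf a n).Nodup :=
  (listOf_props a n h).2.2



theorem rotate_indexOf_eq {l : List ℕ} (nd : l.Nodup) {x : ℕ} {t : List ℕ}
    (h : l ~r (x :: t)) : l.rotate (l.idxOf x) = x :: t := by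
  obtain ⟨k, hk⟩ := h
  have hlen : l.length = t.length + 1 := by rw [← List.length_rotate l k, hk]; simp
  have hl0 : 0 < l.length := by omega
  have hm : k % l.length < l.length := Nat.mod_lt _ hl0
  have hk' : l.rotate (k % l.length) = x :: t := by rw [List.rotate_mod]; exact hk
  have h0 : (l.rotate (k % l.length))[0]? = some x := by rw [hk']; simp
  rw [List.getElem?_rotate (by omega), show (0 + k % l.length) % l.length = k % l.length
    by rw [Nat.zero_add, Nat.mod_eq_of_lt hm]] at h0
  obtain ⟨hlt, hx⟩ := List.getElem?_eq_some_iff.mp h0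
  have hidx : l.idxOf x = k % l.length := by
    rw [← hx]; exact List.get_idxOf nd ⟨_, hlt⟩
  rw [hidx, hk']

theorem rotated_cons_inj {l : List ℕ} (nd : l.Nodup) {x : ℕ} {t1 t2 : List ℕ}
    (h1 : l ~r (x :: t1)) (h2 : l ~r (x :: t2)) : t1 = t2 := by
  have e1 := rotate_indexOf_eq nd h1
  have e2 := rotate_indexOf_eq nd h2
  rw [e1] at e2
  exact (List.cons.injEq _ _ _ _ ▸ e2).2

theorem takeWhile_ne {j : ℕ} : ∀ (A B : List ℕ), (∀ x ∈ A, x ≠ j) →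
    (A ++ j :: B).takeWhile (· ≠ j) = A
  | [], B, _ => by
    rw [List.nil_append, List.takeWhile_cons_of_neg (by simp)]
  | (a :: A), B, h => by
    have ha : a ≠ j := h a (by simp)
    rw [List.cons_append, List.takeWhile_cons_of_pos (by simpa using ha),
      takeWhile_ne A B fun x hx => h x (List.mem_cons_of_mem _ hx)]

theorem arcList_eq {l A B : List ℕ} {i j : ℕ} (nd : l.Nodup)
    (h : l ~r (i :: (A ++ j :: B))) (hj : ∀ x ∈ A, x ≠ j) : arcList l i j = A := by
  unfold arcList
  rw [rotate_indexOf_eq nd h, List.tail_cons]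
  exact takeWhile_ne A B hj

theorem cyclicNext_eq {l : List ℕ} {x y : ℕ} {t : List ℕ}
    (h : l.rotate (l.idxOf x) = x :: y :: t) : cyclicNext l x = y := by
  set k := l.idxOf x with hkdef
  have hx : x ∈ l := (List.mem_rotate (n := k)).mp (h ▸ (List.mem_cons_self (a := x)))
  have hk : k < l.length := List.idxOf_lt_length_iff.mpr hx
  have hlen : l.length = t.length + 2 := by rw [← List.length_rotate l k, h]; simp
  have h1 : (l.rotate k)[1]? = some y := by rw [h]; simp
  rw [List.getElem?_rotate (by omega)] at h1
  unfold cyclicNext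
  rw [List.getD_eq_getElem?_getD, List.getElem?_rotate hk,
    show (k + 1) % l.length = (1 + k) % l.length by rw [Nat.add_comm], h1]
  rfl

theorem cyclicPrev_eq {l : List ℕ} {x y : ℕ} {t : List ℕ}
    (h : l.rotate (l.idxOf x) = x :: (t ++ [y])) : cyclicPrev l x = y := by
  set k := l.idxOf x with hkdef
  have hx : x ∈ l := (List.mem_rotate (n := k)).mp (h ▸ (List.mem_cons_self (a := x)))
  have hk : k < l.length := List.idxOf_lt_length_iff.mpr hx
  have hlen : l.length = t.length + 2 := by rw [← List.length_rotate l k, h]; simp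
  have h1 : (l.rotate k)[t.length + 1]? = some y := by
    rw [h]
    simp
  rw [List.getElem?_rotate (by omega)] at h1
  unfold cyclicPrev
  rw [List.getD_eq_getElem?_getD, List.getElem?_rotate hk,
    congrArg (· % l.length) (by omega : k + (l.length - 1) = t.length + 1 + k), h1]
  rfl

theorem insert_rotate {l : List ℕ} {pos : ℕ} (h1 : 1 ≤ pos) (h2 : pos ≤ l.length) (x : ℕ) :
    ∃ u mid, u ∈ l ∧ l ~r (u :: mid) ∧ (l.insertIdx pos x) ~r (u :: x :: mid) := by
  obtain ⟨u, mid, hrot⟩ : ∃ u mid, l.rotate (pos - 1) = u :: mid := by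
    cases hr : l.rotate (pos - 1) with
    | nil =>
      exfalso
      have hL : l.length = 0 := by simpa using congrArg List.length hr
      omega
    | cons u mid => exact ⟨u, mid, rfl⟩
  have hul : l ~r (u :: mid) := ⟨pos - 1, hrot⟩
  refine ⟨u, mid, ?_, hul, ?_⟩
  · exact (List.mem_rotate (n := pos - 1)).mp (hrot ▸ (List.mem_cons_self (a := u) (l := mid)))
  · have hrp : l.rotate pos = mid ++ [u] := by
      have hr1 : l.rotate pos = (l.rotate (pos - 1)).rotate 1 := by
        rw [List.rotate_rotate]; congr 1; omega
      rw [hr1, hrot, List.rotate_cons_succ, List.rotate_zero]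
    have hTlen : (l.take pos).length = pos := by rw [List.length_take]; omega
    have hrap := List.rotate_append_length_eq (l.take pos) (x :: l.drop pos)
    rw [hTlen] at hrap
    have h3 : (l.insertIdx pos x).rotate pos = x :: (mid ++ [u]) := by
      rw [insertIdx_eq x pos l h2, hrap, ← hrp, List.rotate_eq_drop_append_take h2]
      simp
    have h4 : (l.insertIdx pos x) ~r (x :: (mid ++ [u])) := ⟨pos, h3⟩
    refine h4.trans ?_
    have := List.isRotated_concat u (x :: mid)
    simpa using this

theorem stage_data (a : InfCycle) {n : ℕ} (hn : 3 ≤ n) :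
    ∃ u mid, u ∈ listOf a n ∧ listOf a n ~r (u :: mid) ∧
      listOf a (n+1) ~r (u :: (n+1) :: mid) ∧
      ∃ hmid : mid ≠ [], nuMinus a (n+1) = u ∧ nuPlus a (n+1) = mid.head hmid := by
  obtain ⟨k, rfl⟩ : ∃ k, n = k + 3 := ⟨n - 3, by omega⟩
  have hlen : (listOf a (k+3)).length = k + 3 := length_listOf a (by omega)
  have hpos1 : 1 ≤ (a k).val + 1 := by omega
  have hpos2 : (a k).val + 1 ≤ (listOf a (k+3)).length := by have := (a k).isLt; omega
  obtain ⟨u, mid, hu, hul, hins⟩ := insert_rotate hpos1 hpos2 (k + 4)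
  have hins' : listOf a (k+3+1) ~r (u :: (k+3+1) :: mid) := by
    rw [show k+3+1 = k+4 from rfl, listOf_succ]
    exact hins
  have hmidlen : mid.length = k + 2 := by
    have := hul.perm.length_eq
    simp at this; omega
  have hmid : mid ≠ [] := by
    intro hh; rw [hh] at hmidlen; simp at hmidlen
  refine ⟨u, mid, hu, hul, hins', hmid, ?_⟩
  have nd : (listOf a (k+3+1)).Nodup := nodup_listOf a (by omega)
  have h2 : listOf a (k+3+1) ~r ((k+3+1) :: (mid ++ [u])) := by
    refine hins'.trans ⟨1, ?_⟩
    rw [List.rotate_cons_succ, List.rotate_zero]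
    simp
  have hrot := rotate_indexOf_eq nd h2
  obtain ⟨z, mid', rfl⟩ : ∃ z mid', mid = z :: mid' := by
    cases mid with
    | nil => simp at hmid
    | cons z mid' => exact ⟨z, mid', rfl⟩
  constructor
  · show nuMinus a (k+3+1) = u
    unfold nuMinus
    rw [if_neg (by omega), if_neg (by omega)]
    exact cyclicPrev_eq (t := z :: mid') hrot
  · show nuPlus a (k+3+1) = z
    unfold nuPlus
    rw [if_neg (by omega), if_neg (by omega)]
    exact cyclicNext_eq (y := z) (t := mid' ++ [u]) (by simpa using hrot)

theorem nuSet_mem_lt {a : InfCycle} {m x : ℕ} (hm : 4 ≤ m) (hx : x ∈ nuSet a m) :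
    1 ≤ x ∧ x < m := by
  obtain ⟨n, rfl⟩ : ∃ n, m = n + 1 := ⟨m - 1, by omega⟩
  obtain ⟨u, mid, hu, hul, hins, hmid, hminus, hplus⟩ := stage_data a (show 3 ≤ n by omega)
  have hx' : x = nuPlus a (n+1) ∨ x = nuMinus a (n+1) := by
    simpa [nuSet, Finset.mem_insert, Finset.mem_singleton] using hx
  have hmem : x ∈ u :: mid := by
    rcases hx' with h | h
    · rw [h, hplus]; exact List.mem_cons_of_mem _ (List.head_mem hmid)
    · rw [h, hminus]; exact List.mem_cons_self
  have : x ∈ listOf a n := hul.perm.symm.subset hmem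
  have := (mem_listOf a (show 3 ≤ n by omega)).mp this
  omega

def Phi (a : InfCycle) (i j n : ℕ) (S : List ℕ) : Prop :=
  ((∃ m : ℕ, 4 ≤ m ∧ m ≤ n ∧ nuSet a m = {i, j}) ↔
      (S ≠ [] ∧ ∀ x ∈ S, i < x ∧ j < x)) ∧
  (∀ m : ℕ, 4 ≤ m → m ≤ n → nuSet a m = {i, j} → m ∈ S ∧ ∀ x ∈ S, m ≤ x)

theorem segPivot_spec {i j : ℕ} (hij : i ≠ j) :
    1 ≤ segPivot i j ∧ segPivot i j ≤ 3 ∧ segPivot i j ≠ i ∧ segPivot i j ≠ j := by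
  unfold segPivot
  split_ifs <;> omega

theorem pair_eq_pair_iff {x y i j : ℕ} :
    ({x, y} : Finset ℕ) = {i, j} ↔ (x = i ∧ y = j) ∨ (x = j ∧ y = i) := by
  constructor
  · intro h
    have hx : x = i ∨ x = j := by
      have : x ∈ ({i, j} : Finset ℕ) := h ▸ (by simp)
      simpa using this
    have hy : y = i ∨ y = j := by
      have : y ∈ ({i, j} : Finset ℕ) := h ▸ (by simp)
      simpa using this
    have hi : i = x ∨ i = y := by
      have : i ∈ ({x, y} : Finset ℕ) := h ▸ (by simp)
      simpa using this
    have hj : j = x ∨ j = y := by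
      have : j ∈ ({x, y} : Finset ℕ) := h ▸ (by simp)
      simpa using this
    omega
  · rintro (⟨rfl, rfl⟩ | ⟨rfl, rfl⟩)
    · rfl
    · exact Finset.pair_comm x y

theorem decomp_facts {i j : ℕ} {A B : List ℕ} (nd : (i :: (A ++ j :: B)).Nodup) :
    i ∉ A ∧ i ∉ B ∧ j ∉ A ∧ j ∉ B ∧ (∀ x, x ∈ A → x ∈ B → False) ∧ i ≠ j := by
  rw [List.nodup_cons, List.mem_append, List.mem_cons] at nd
  obtain ⟨h1, h2⟩ := nd
  rw [List.nodup_append'] at h2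
  obtain ⟨hA, hjB, hdisj⟩ := h2
  rw [List.nodup_cons] at hjB
  exact ⟨fun h => h1 (Or.inl h), fun h => h1 (Or.inr (Or.inr h)),
    fun h => hdisj h List.mem_cons_self, hjB.1,
    fun x hxA hxB => hdisj hxA (List.mem_cons_of_mem _ hxB),
    fun h => h1 (Or.inr (Or.inl h))⟩

theorem exists_decomp {l : List ℕ} (nd : l.Nodup) {i j : ℕ} (hi : i ∈ l) (hj : j ∈ l)
    (hij : i ≠ j) : ∃ A B, l ~r (i :: (A ++ j :: B)) := by
  have hk : l.idxOf i < l.length := List.idxOf_lt_length_iff.mpr hi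
  obtain ⟨x, t, hxt⟩ : ∃ x t, l.rotate (l.idxOf i) = x :: t := by
    cases hr : l.rotate (l.idxOf i) with
    | nil =>
      exfalso
      have hL : l.length = 0 := by simpa using congrArg List.length hr
      omega
    | cons x t => exact ⟨x, t, rfl⟩
  have hx : x = i := by
    have h0 : (l.rotate (l.idxOf i))[0]? = some x := by rw [hxt]; simp
    rw [List.getElem?_rotate (by omega),
      show (0 + l.idxOf i) % l.length = l.idxOf i by
        rw [Nat.zero_add, Nat.mod_eq_of_lt hk]] at h0
    obtain ⟨hlt, hval⟩ := List.getElem?_eq_some_iff.mp h0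
    rw [← hval]
    exact List.getElem_idxOf hk
  rw [hx] at hxt
  have hjt : j ∈ t := by
    have : j ∈ l.rotate (l.idxOf i) := (List.mem_rotate).mpr hj
    rw [hxt] at this
    rcases List.mem_cons.mp this with h | h
    · exact absurd h.symm hij
    · exact h
  obtain ⟨A, B, rfl⟩ := List.append_of_mem hjt
  exact ⟨A, B, ⟨l.idxOf i, hxt⟩⟩

theorem phi_step {a : InfCycle} {i j n : ℕ} {S S' : List ℕ} (hn : 3 ≤ n)
    (hi : i < n + 1) (hj : j < n + 1)
    (hcase : ((∀ x, x ∈ S' ↔ x ∈ S) ∧ nuSet a (n+1) ≠ {i, j}) ∨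
      ((∀ x, x ∈ S' ↔ x = n + 1 ∨ x ∈ S) ∧ (nuSet a (n+1) = {i, j} ↔ S = [])))
    (hS : Phi a i j n S) : Phi a i j (n+1) S' := by
  obtain ⟨hiff, hmin⟩ := hS
  rcases hcase with ⟨hmem, hne⟩ | ⟨hmem, hiffe⟩
  · constructor
    · constructor
      · rintro ⟨m, h4, hle, hset⟩
        have hmn : m ≤ n := by
          rcases Nat.lt_or_ge m (n+1) with h | h
          · omega
          · exact absurd (by rw [show m = n+1 by omega] at hset; exact hset) hne
        obtain ⟨hS0, hall⟩ := hiff.mp ⟨m, h4, hmn, hset⟩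
        obtain ⟨x0, hx0⟩ := List.exists_mem_of_ne_nil _ hS0
        exact ⟨List.ne_nil_of_mem ((hmem x0).mpr hx0), fun x hx => hall x ((hmem x).mp hx)⟩
      · rintro ⟨hS0, hall⟩
        obtain ⟨x0, hx0⟩ := List.exists_mem_of_ne_nil _ hS0
        obtain ⟨m, h4, hle, hset⟩ := hiff.mpr ⟨List.ne_nil_of_mem ((hmem x0).mp hx0),
          fun x hx => hall x ((hmem x).mpr hx)⟩
        exact ⟨m, h4, by omega, hset⟩
    · intro m h4 hle hset
      have hmn : m ≤ n := by
        rcases Nat.lt_or_ge m (n+1) with h | h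
        · omega
        · exact absurd (by rw [show m = n+1 by omega] at hset; exact hset) hne
      obtain ⟨hm1, hm2⟩ := hmin m h4 hmn hset
      exact ⟨(hmem m).mpr hm1, fun x hx => hm2 x ((hmem x).mp hx)⟩
  · by_cases hS0 : S = []
    · have hset : nuSet a (n+1) = {i, j} := hiffe.mpr hS0
      have hnoold : ¬ ∃ m : ℕ, 4 ≤ m ∧ m ≤ n ∧ nuSet a m = {i, j} := by
        intro hex
        exact (hiff.mp hex).1 hS0
      subst hS0
      constructor
      · constructor
        · intro _
          refine ⟨List.ne_nil_of_mem ((hmem (n+1)).mpr (Or.inl rfl)), fun x hx => ?_⟩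
          rcases (hmem x).mp hx with rfl | hx'
          · omega
          · simp at hx'
        · intro _
          exact ⟨n+1, by omega, le_refl _, hset⟩
      · intro m h4 hle hset'
        have hm : m = n + 1 := by
          rcases Nat.lt_or_ge m (n+1) with h | h
          · exact absurd ⟨m, h4, by omega, hset'⟩ hnoold
          · omega
        subst hm
        refine ⟨(hmem _).mpr (Or.inl rfl), fun x hx => ?_⟩
        rcases (hmem x).mp hx with rfl | hx'
        · exact le_refl _
        · simp at hx'
    · have hne : nuSet a (n+1) ≠ {i, j} := fun h => hS0 (hiffe.mp h)
      constructor
      · constructor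
        · rintro ⟨m, h4, hle, hset⟩
          have hmn : m ≤ n := by
            rcases Nat.lt_or_ge m (n+1) with h | h
            · omega
            · exact absurd (by rw [show m = n+1 by omega] at hset; exact hset) hne
          obtain ⟨hS1, hall⟩ := hiff.mp ⟨m, h4, hmn, hset⟩
          refine ⟨List.ne_nil_of_mem ((hmem (n+1)).mpr (Or.inl rfl)), fun x hx => ?_⟩
          rcases (hmem x).mp hx with rfl | hx'
          · omega
          · exact hall x hx'
        · rintro ⟨_, hall⟩
          obtain ⟨m, h4, hle, hset⟩ := hiff.mpr ⟨hS0,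
            fun x hx => hall x ((hmem x).mpr (Or.inr hx))⟩
          exact ⟨m, h4, by omega, hset⟩
      · intro m h4 hle hset'
        have hmn : m ≤ n := by
          rcases Nat.lt_or_ge m (n+1) with h | h
          · omega
          · exact absurd (by rw [show m = n+1 by omega] at hset'; exact hset') hne
        obtain ⟨hm1, hm2⟩ := hmin m h4 hmn hset'
        refine ⟨(hmem m).mpr (Or.inr hm1), fun x hx => ?_⟩
        rcases (hmem x).mp hx with rfl | hx'
        · omega
        · exact hm2 x hx'

theorem fresh {a : InfCycle} {i j n : ℕ} (hn : 3 ≤ n) (hi1 : 1 ≤ i) (hj1 : 1 ≤ j)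
    (hij : i ≠ j) (hi : i ≤ n) (hj : j ≤ n) (hcond : n = 3 ∨ n = max i j) :
    ∃ A B, listOf a n ~r (i :: (A ++ j :: B)) ∧
      Phi a i j n (if segPivot i j ∈ A then B else A) := by
  have nd := nodup_listOf a hn
  have hi' : i ∈ listOf a n := (mem_listOf a hn).mpr ⟨hi1, hi⟩
  have hj' : j ∈ listOf a n := (mem_listOf a hn).mpr ⟨hj1, hj⟩
  obtain ⟨A, B, hdec⟩ := exists_decomp nd hi' hj' hij
  have ndr : (i :: (A ++ j :: B)).Nodup := hdec.nodup_iff.mp nd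
  obtain ⟨hiA, hiB, hjA, hjB, hABdisj, _⟩ := decomp_facts ndr
  obtain ⟨hp1, hp3, hpi, hpj⟩ := segPivot_spec (i := i) (j := j) hij
  refine ⟨A, B, hdec, ?_, ?_⟩
  case refine_2 =>
    intro m h4 hle hset
    exfalso
    have hi'' : i ∈ nuSet a m := by rw [hset]; simp
    have hj'' : j ∈ nuSet a m := by rw [hset]; simp
    have h1 := nuSet_mem_lt h4 hi''
    have h2 := nuSet_mem_lt h4 hj''
    rcases hcond with rfl | hmax <;> omega
  case refine_1 =>
    constructor
    · rintro ⟨m, h4, hle, hset⟩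
      exfalso
      have hi'' : i ∈ nuSet a m := by rw [hset]; simp
      have hj'' : j ∈ nuSet a m := by rw [hset]; simp
      have h1 := nuSet_mem_lt h4 hi''
      have h2 := nuSet_mem_lt h4 hj''
      rcases hcond with rfl | hmax <;> omega
    · rintro ⟨hS0, hall⟩
      exfalso
      obtain ⟨x, hx⟩ := List.exists_mem_of_ne_nil _ hS0
      have hxAB : (x ∈ A ∨ x ∈ B) ∧ x ≠ segPivot i j := by
        by_cases hpA : segPivot i j ∈ A
        · rw [if_pos hpA] at hx
          exact ⟨Or.inr hx, fun h => hABdisj _ hpA (h ▸ hx)⟩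
        · rw [if_neg hpA] at hx
          exact ⟨Or.inl hx, fun h => hpA (h ▸ hx)⟩
      obtain ⟨hxor, hxp⟩ := hxAB
      have hxi : x ≠ i := fun he => by
        rcases hxor with h | h
        · exact hiA (he ▸ h)
        · exact hiB (he ▸ h)
      have hxj : x ≠ j := fun he => by
        rcases hxor with h | h
        · exact hjA (he ▸ h)
        · exact hjB (he ▸ h)
      have hxl : x ∈ listOf a n := hdec.perm.symm.subset (by
        rcases hxor with h | h
        · exact List.mem_cons_of_mem _ (List.mem_append_left _ h)
        · exact List.mem_cons_of_mem _ (List.mem_append_right _ (List.mem_cons_of_mem _ h)))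
      have hxn := (mem_listOf a hn).mp hxl
      obtain ⟨hgi, hgj⟩ := hall x hx
      rcases hcond with rfl | hmax <;> omega


set_option maxHeartbeats 1000000 in
theorem step {a : InfCycle} {i j n : ℕ} (hn : 3 ≤ n) (hi1 : 1 ≤ i) (hj1 : 1 ≤ j) (hij : i ≠ j)
    (hi : i ≤ n) (hj : j ≤ n)
    (ih : ∃ A B, listOf a n ~r (i :: (A ++ j :: B)) ∧
      Phi a i j n (if segPivot i j ∈ A then B else A)) :
    ∃ A B, listOf a (n+1) ~r (i :: (A ++ j :: B)) ∧
      Phi a i j (n+1) (if segPivot i j ∈ A then B else A) := by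
  obtain ⟨A, B, hdec, hphi⟩ := ih
  obtain ⟨u, mid, hu, hul, hins, hmid, hminus, hplus⟩ := stage_data a hn
  have nd := nodup_listOf a hn
  have ndr : (i :: (A ++ j :: B)).Nodup := hdec.nodup_iff.mp nd
  obtain ⟨hiA, hiB, hjA, hjB, hABdisj, _⟩ := decomp_facts ndr
  obtain ⟨hp1, hp3, hpi, hpj⟩ := segPivot_spec (i := i) (j := j) hij
  have hnu : nuSet a (n+1) = {nuPlus a (n+1), nuMinus a (n+1)} := rfl
  have hpmem : segPivot i j ∈ A ∨ segPivot i j ∈ B := by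
    have hpl : segPivot i j ∈ listOf a n := (mem_listOf a hn).mpr ⟨hp1, by omega⟩
    have h := hdec.perm.subset hpl
    simp only [List.mem_cons, List.mem_append] at h
    rcases h with h | h | h | h
    · exact absurd h hpi
    · exact Or.inl h
    · exact absurd h hpj
    · exact Or.inr h
  have husplit : u = i ∨ u = j ∨ u ∈ A ∨ u ∈ B := by
    have h := hdec.perm.subset hu
    simp only [List.mem_cons, List.mem_append] at h
    tauto
  rcases husplit with huI | huJ | huA | huB
  · -- u = i
    rw [huI] at hul hins hminus
    have hmideq : mid = A ++ j :: B := rotated_cons_inj nd hul hdec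
    subst hmideq
    have hkey : nuSet a (n+1) = {i, j} ↔ A = [] := by
      cases A with
      | nil =>
        have h0 : nuPlus a (n+1) = j := hplus
        rw [hnu, h0, hminus]
        simp [Finset.pair_comm]
      | cons a0 A' =>
        have h0 : nuPlus a (n+1) = a0 := hplus
        rw [hnu, h0, hminus]
        simp only [List.cons_ne_nil, iff_false]
        intro h
        rcases pair_eq_pair_iff.mp h with ⟨h1, h2⟩ | ⟨h1, h2⟩
        · exact hij h2
        · exact hjA (h1 ▸ (List.mem_cons_self (a := a0) (l := A')))
    refine ⟨(n+1) :: A, B, ?_, ?_⟩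
    · have he : i :: (((n+1) :: A) ++ j :: B) = i :: (n+1) :: (A ++ j :: B) := by simp
      rw [he]; exact hins
    · by_cases hpA : segPivot i j ∈ A
      · rw [if_pos (List.mem_cons_of_mem _ hpA)]
        rw [if_pos hpA] at hphi
        refine phi_step hn (by omega) (by omega) (Or.inl ⟨fun x => Iff.rfl, ?_⟩) hphi
        intro hq; rw [hkey] at hq; rw [hq] at hpA; simp at hpA
      · have hpA2 : segPivot i j ∉ (n+1) :: A := by
          simp only [List.mem_cons]; push_neg; exact ⟨by omega, hpA⟩
        rw [if_neg hpA2]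
        rw [if_neg hpA] at hphi
        exact phi_step hn (by omega) (by omega) (Or.inr ⟨fun x => by simp, hkey⟩) hphi
  · -- u = j
    rw [huJ] at hul hins hminus
    have hdec2 : listOf a n ~r (j :: (B ++ i :: A)) := by
      refine hdec.trans ?_
      have h1 : i :: (A ++ j :: B) = (i :: A) ++ (j :: B) := by simp
      have h2 : j :: (B ++ i :: A) = (j :: B) ++ (i :: A) := by simp
      rw [h1, h2]
      exact List.isRotated_append
    have hmideq : mid = B ++ i :: A := rotated_cons_inj nd hul hdec2
    subst hmideq
    have hkey : nuSet a (n+1) = {i, j} ↔ B = [] := by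
      cases B with
      | nil =>
        have h0 : nuPlus a (n+1) = i := hplus
        rw [hnu, h0, hminus]
        simp
      | cons b0 B' =>
        have h0 : nuPlus a (n+1) = b0 := hplus
        rw [hnu, h0, hminus]
        simp only [List.cons_ne_nil, iff_false]
        intro h
        rcases pair_eq_pair_iff.mp h with ⟨h1, h2⟩ | ⟨h1, h2⟩
        · exact hiB (h1 ▸ (List.mem_cons_self (a := b0) (l := B')))
        · exact hij h2.symm
    refine ⟨A, (n+1) :: B, ?_, ?_⟩
    · refine hins.trans ?_
      have h1 : j :: (n+1) :: (B ++ i :: A) = (j :: (n+1) :: B) ++ (i :: A) := by simp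
      have h2 : i :: (A ++ j :: (n+1) :: B) = (i :: A) ++ (j :: (n+1) :: B) := by simp
      rw [h1, h2]
      exact List.isRotated_append
    · by_cases hpA : segPivot i j ∈ A
      · rw [if_pos hpA]
        rw [if_pos hpA] at hphi
        exact phi_step hn (by omega) (by omega) (Or.inr ⟨fun x => by simp, hkey⟩) hphi
      · rw [if_neg hpA]
        rw [if_neg hpA] at hphi
        refine phi_step hn (by omega) (by omega) (Or.inl ⟨fun x => Iff.rfl, ?_⟩) hphi
        have hpB : segPivot i j ∈ B := hpmem.resolve_left hpA
        intro hq; rw [hkey] at hq; rw [hq] at hpB; simp at hpB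
  · -- u ∈ A
    obtain ⟨A1, A2, rfl⟩ := List.append_of_mem huA
    have hdec2 : listOf a n ~r (u :: ((A2 ++ j :: B) ++ (i :: A1))) := by
      refine hdec.trans ?_
      have h1 : i :: ((A1 ++ u :: A2) ++ j :: B) = (i :: A1) ++ (u :: (A2 ++ j :: B)) := by simp
      have h2 : u :: ((A2 ++ j :: B) ++ (i :: A1)) = (u :: (A2 ++ j :: B)) ++ (i :: A1) := by
        simp
      rw [h1, h2]
      exact List.isRotated_append
    have hmideq : mid = (A2 ++ j :: B) ++ (i :: A1) := rotated_cons_inj nd hul hdec2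
    subst hmideq
    have hne : nuSet a (n+1) ≠ {i, j} := by
      intro h
      have hu' : nuMinus a (n+1) ∈ ({i, j} : Finset ℕ) := by
        rw [← h, hnu]; simp
      rw [hminus] at hu'
      simp only [Finset.mem_insert, Finset.mem_singleton] at hu'
      rcases hu' with rfl | rfl
      · exact hiA huA
      · exact hjA huA
    refine ⟨A1 ++ u :: (n+1) :: A2, B, ?_, ?_⟩
    · refine hins.trans ?_
      have h1 : u :: (n+1) :: ((A2 ++ j :: B) ++ (i :: A1))
          = (u :: (n+1) :: (A2 ++ j :: B)) ++ (i :: A1) := by simp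
      have h2 : i :: ((A1 ++ u :: (n+1) :: A2) ++ j :: B)
          = (i :: A1) ++ (u :: (n+1) :: (A2 ++ j :: B)) := by simp
      rw [h1, h2]
      exact List.isRotated_append
    · have hmm : ∀ x, x ∈ A1 ++ u :: (n+1) :: A2 ↔ x = n+1 ∨ x ∈ A1 ++ u :: A2 := by
        intro x; simp only [List.mem_append, List.mem_cons]; tauto
      by_cases hpA : segPivot i j ∈ A1 ++ u :: A2
      · have hpA2 : segPivot i j ∈ A1 ++ u :: (n+1) :: A2 := (hmm _).mpr (Or.inr hpA)
        rw [if_pos hpA2]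
        rw [if_pos hpA] at hphi
        exact phi_step hn (by omega) (by omega) (Or.inl ⟨fun x => Iff.rfl, hne⟩) hphi
      · have hpA2 : segPivot i j ∉ A1 ++ u :: (n+1) :: A2 := by
          rw [hmm]; push_neg; exact ⟨by omega, hpA⟩
        rw [if_neg hpA2]
        rw [if_neg hpA] at hphi
        refine phi_step hn (by omega) (by omega) (Or.inr ⟨hmm, ?_⟩) hphi
        constructor
        · intro h; exact absurd h hne
        · intro h; rw [h] at huA; simp at huA
  · -- u ∈ B
    obtain ⟨B1, B2, rfl⟩ := List.append_of_mem huB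
    have hdec2 : listOf a n ~r (u :: (B2 ++ (i :: (A ++ j :: B1)))) := by
      refine hdec.trans ?_
      have h1 : i :: (A ++ j :: (B1 ++ u :: B2)) = (i :: (A ++ j :: B1)) ++ (u :: B2) := by simp
      have h2 : u :: (B2 ++ (i :: (A ++ j :: B1))) = (u :: B2) ++ (i :: (A ++ j :: B1)) := by simp
      rw [h1, h2]
      exact List.isRotated_append
    have hmideq : mid = B2 ++ (i :: (A ++ j :: B1)) := rotated_cons_inj nd hul hdec2
    subst hmideq
    have hne : nuSet a (n+1) ≠ {i, j} := by
      intro h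
      have hu' : nuMinus a (n+1) ∈ ({i, j} : Finset ℕ) := by
        rw [← h, hnu]; simp
      rw [hminus] at hu'
      simp only [Finset.mem_insert, Finset.mem_singleton] at hu'
      rcases hu' with rfl | rfl
      · exact hiB huB
      · exact hjB huB
    refine ⟨A, B1 ++ u :: (n+1) :: B2, ?_, ?_⟩
    · refine hins.trans ?_
      have h1 : u :: (n+1) :: (B2 ++ (i :: (A ++ j :: B1)))
          = (u :: (n+1) :: B2) ++ (i :: (A ++ j :: B1)) := by simp
      have h2 : i :: (A ++ j :: (B1 ++ u :: (n+1) :: B2))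
          = (i :: (A ++ j :: B1)) ++ (u :: (n+1) :: B2) := by simp
      rw [h1, h2]
      exact List.isRotated_append
    · have hmm : ∀ x, x ∈ B1 ++ u :: (n+1) :: B2 ↔ x = n+1 ∨ x ∈ B1 ++ u :: B2 := by
        intro x; simp only [List.mem_append, List.mem_cons]; tauto
      by_cases hpA : segPivot i j ∈ A
      · rw [if_pos hpA]
        rw [if_pos hpA] at hphi
        refine phi_step hn (by omega) (by omega) (Or.inr ⟨hmm, ?_⟩) hphi
        constructor
        · intro h; exact absurd h hne
        · intro h; rw [h] at huB; simp at huB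
      · rw [if_neg hpA]
        rw [if_neg hpA] at hphi
        exact phi_step hn (by omega) (by omega) (Or.inl ⟨fun x => Iff.rfl, hne⟩) hphi

theorem main_aux (a : InfCycle) {i j : ℕ} (hi1 : 1 ≤ i) (hj1 : 1 ≤ j) (hij : i ≠ j) :
    ∀ n, 3 ≤ n → i ≤ n → j ≤ n → ∃ A B, listOf a n ~r (i :: (A ++ j :: B)) ∧
      Phi a i j n (if segPivot i j ∈ A then B else A) := by
  intro n hn
  induction n, hn using Nat.le_induction with
  | base => intro hi hj; exact fresh (by omega) hi1 hj1 hij hi hj (Or.inl rfl)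
  | succ n hn ih =>
    intro hi hj
    by_cases hc : i ≤ n ∧ j ≤ n
    · exact step hn hi1 hj1 hij hc.1 hc.2 (ih hc.1 hc.2)
    · exact fresh (by omega) hi1 hj1 hij hi hj (Or.inr (by omega))

end NuPair

/-- There exists `n ≤ n'` with `ν_A(n) = {i,j}` iff the cycSegment of
`A_{n'}` between `i` and `j` is nonempty and all of its nodes are larger than both `i`
and `j`; in that case the unique such `n` is the smallest node of that cycSegment. -/
theorem nu_pair_characterization (a : InfCycle) (i j n' : ℕ)
    (hi : 1 ≤ i) (hj : 1 ≤ j) (hij : i ≠ j) (hn' : 3 ≤ n') (hin : i < n') (hjn : j < n') :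
    ((∃ n : ℕ, 4 ≤ n ∧ n ≤ n' ∧ nuSet a n = {i, j}) ↔
      (cycSegment (listOf a n') i j ≠ [] ∧
        ∀ x ∈ cycSegment (listOf a n') i j, i < x ∧ j < x)) ∧
    (∀ n : ℕ, 4 ≤ n → n ≤ n' → nuSet a n = {i, j} →
      n ∈ cycSegment (listOf a n') i j ∧ ∀ x ∈ cycSegment (listOf a n') i j, n ≤ x) := by
  obtain ⟨A, B, hdec, hphi⟩ := NuPair.main_aux a hi hj hij n' hn' (le_of_lt hin) (le_of_lt hjn)
  have nd := NuPair.nodup_listOf a hn'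
  have ndr : (i :: (A ++ j :: B)).Nodup := hdec.nodup_iff.mp nd
  obtain ⟨hiA, hiB, hjA, hjB, _, _⟩ := NuPair.decomp_facts ndr
  have hdec2 : listOf a n' ~r (j :: (B ++ i :: A)) := by
    refine hdec.trans ?_
    have h1 : i :: (A ++ j :: B) = (i :: A) ++ (j :: B) := by simp
    have h2 : j :: (B ++ i :: A) = (j :: B) ++ (i :: A) := by simp
    rw [h1, h2]
    exact List.isRotated_append
  have hA : arcList (listOf a n') i j = A :=
    NuPair.arcList_eq nd hdec (fun x hx h => hjA (h ▸ hx))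
  have hB : arcList (listOf a n') j i = B :=
    NuPair.arcList_eq nd hdec2 (fun x hx h => hiB (h ▸ hx))
  have hseg : cycSegment (listOf a n') i j = (if segPivot i j ∈ A then B else A) := by
    unfold cycSegment
    rw [hA, hB]
  rw [hseg]
  exact hphi
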